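/- There exists r₀ > 0 such that for every r ∈ (0, r₀], the set S_r = {(x,y,z) ∈ ℝ³ : x² + y² + z² = r², xyz − z⁴ < 0} has exactly two connected components. -/

import Mathlib

open Set

noncomputable def mk3 (a b c : ℝ) : EuclideanSpace ℝ (Fin 3) :=
  (WithLp.equiv 2 (Fin 3 → ℝ)).symm ![a, b, c]
@[simp] lemma mk3_0 (a b c : ℝ) : mk3 a b c 0 = a := rfl
@[simp] lemma mk3_1 (a b c : ℝ) : mk3 a b c 1 = b := rfl
@[simp] lemma mk3_2 (a b c : ℝ) : mk3 a b c 2 = c := rfl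

lemma mk3_eta (p : EuclideanSpace ℝ (Fin 3)) : mk3 (p 0) (p 1) (p 2) = p := by
  ext i; fin_cases i <;> rfl

lemma cont_mk3 {X : Type*} [TopologicalSpace X] {f g h : X → ℝ}
    (hf : Continuous f) (hg : Continuous g) (hh : Continuous h) :
    Continuous (fun x => mk3 (f x) (g x) (h x)) := by
  apply (PiLp.continuous_toLp 2 (fun _ : Fin 3 => ℝ)).comp
  apply continuous_pi
  intro i
  fin_cases i <;> simp <;> assumption

lemma sPlus_preconn (r : ℝ) (hr : 0 < r) :
    IsPreconnected {p : EuclideanSpace ℝ (Fin 3) |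
      p 0 ^ 2 + p 1 ^ 2 + p 2 ^ 2 = r ^ 2 ∧ p 0 * p 1 * p 2 - p 2 ^ 4 < 0 ∧ 0 < p 2} := by
  set D : Set (ℝ × ℝ) :=
    {q | 0 < q.2 ∧ q.2 ≤ r ∧ (r ^ 2 - q.2 ^ 2) * (Real.cos q.1 * Real.sin q.1) < q.2 ^ 3}
    with hDdef
  have hDr : ∀ θ : ℝ, (θ, r) ∈ D := by
    intro θ
    refine ⟨hr, le_rfl, ?_⟩
    have h0 : (r ^ 2 - r ^ 2) * (Real.cos θ * Real.sin θ) = 0 := by ring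
    dsimp only
    rw [h0]; positivity
  have key : ∀ p ∈ D, (({p.1} ×ˢ Icc p.2 r : Set (ℝ × ℝ)) ∪ (univ ×ˢ {r})) ⊆ D := by
    rintro ⟨θ, z0⟩ ⟨hz0, hz0r, hlt⟩ q hq
    dsimp only at hz0 hz0r hlt
    rcases hq with ⟨hθ, hz⟩ | ⟨-, hz⟩
    · simp only [mem_singleton_iff] at hθ
      obtain ⟨hz1, hz2⟩ := hz
      dsimp only at hθ hz1 hz2
      refine ⟨lt_of_lt_of_le hz0 hz1, hz2, ?_⟩
      rw [hθ]
      rcases le_or_gt (Real.cos θ * Real.sin θ) 0 with hc | hc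
      · have h1 : (0:ℝ) ≤ r ^ 2 - q.2 ^ 2 := by nlinarith
        have h2 : (0:ℝ) < q.2 ^ 3 := pow_pos (lt_of_lt_of_le hz0 hz1) 3
        nlinarith [mul_nonpos_of_nonneg_of_nonpos h1 hc]
      · calc (r ^ 2 - q.2 ^ 2) * (Real.cos θ * Real.sin θ)
            ≤ (r ^ 2 - z0 ^ 2) * (Real.cos θ * Real.sin θ) :=
              mul_le_mul_of_nonneg_right (by nlinarith) hc.le
          _ < z0 ^ 3 := hlt
          _ ≤ q.2 ^ 3 := pow_le_pow_left₀ hz0.le hz1 3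
    · simp only [mem_singleton_iff] at hz
      have := hDr q.1
      rwa [show (q.1, r) = q by ext <;> simp [hz.symm]] at this
  have hDeq : D = ⋃ p : D, (({(p : ℝ × ℝ).1} ×ˢ Icc (p : ℝ × ℝ).2 r : Set (ℝ × ℝ)) ∪ (univ ×ˢ {r})) := by
    apply Subset.antisymm
    · intro q hq
      exact mem_iUnion.2 ⟨⟨q, hq⟩, Or.inl ⟨mem_singleton _, ⟨le_rfl, hq.2.1⟩⟩⟩
    · exact iUnion_subset fun p => key p p.2
  have hDconn : IsPreconnected D := by
    rw [hDeq]
    apply isPreconnected_iUnion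
    · exact ⟨(0, r), mem_iInter.2 fun p => Or.inr ⟨mem_univ _, mem_singleton _⟩⟩
    · intro p
      apply IsPreconnected.union ((p : ℝ × ℝ).1, r)
      · exact ⟨mem_singleton _, ⟨p.2.2.1, le_rfl⟩⟩
      · exact ⟨mem_univ _, mem_singleton _⟩
      · exact ((convex_singleton _).prod (convex_Icc _ _)).isPreconnected
      · exact (convex_univ.prod (convex_singleton _)).isPreconnected
  have hΦc : Continuous (fun q : ℝ × ℝ =>
      mk3 (Real.sqrt (r ^ 2 - q.2 ^ 2) * Real.cos q.1)
        (Real.sqrt (r ^ 2 - q.2 ^ 2) * Real.sin q.1) q.2) := by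
    apply cont_mk3 <;> fun_prop
  have himg : (fun q : ℝ × ℝ =>
      mk3 (Real.sqrt (r ^ 2 - q.2 ^ 2) * Real.cos q.1)
        (Real.sqrt (r ^ 2 - q.2 ^ 2) * Real.sin q.1) q.2) '' D
      = {p : EuclideanSpace ℝ (Fin 3) |
      p 0 ^ 2 + p 1 ^ 2 + p 2 ^ 2 = r ^ 2 ∧ p 0 * p 1 * p 2 - p 2 ^ 4 < 0 ∧ 0 < p 2} := by
    ext p
    constructor
    · rintro ⟨⟨θ, z⟩, ⟨hz, hzr, hlt⟩, rfl⟩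
      dsimp only at hz hzr hlt ⊢
      have hz2 : z ^ 2 ≤ r ^ 2 := by nlinarith
      have hs : Real.sqrt (r ^ 2 - z ^ 2) ^ 2 = r ^ 2 - z ^ 2 :=
        Real.sq_sqrt (by linarith)
      have hpyth : Real.sin θ ^ 2 + Real.cos θ ^ 2 = 1 := Real.sin_sq_add_cos_sq θ
      simp only [mem_setOf_eq, mk3_0, mk3_1, mk3_2]
      refine ⟨?_, ?_, hz⟩
      · have hq : (Real.sqrt (r ^ 2 - z ^ 2) * Real.cos θ) ^ 2 +
            (Real.sqrt (r ^ 2 - z ^ 2) * Real.sin θ) ^ 2 + z ^ 2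
            = Real.sqrt (r ^ 2 - z ^ 2) ^ 2 * (Real.sin θ ^ 2 + Real.cos θ ^ 2) + z ^ 2 := by
          ring
        rw [hq, hs, hpyth]; ring
      · have heq : Real.sqrt (r ^ 2 - z ^ 2) * Real.cos θ * (Real.sqrt (r ^ 2 - z ^ 2) * Real.sin θ)
            = (r ^ 2 - z ^ 2) * (Real.cos θ * Real.sin θ) := by
          linear_combination (Real.cos θ * Real.sin θ) * hs
        rw [heq]
        nlinarith [mul_lt_mul_of_pos_right hlt hz]
    · rintro ⟨hsum, hf, hz⟩
      have hz2 : p 0 ^ 2 + p 1 ^ 2 = r ^ 2 - p 2 ^ 2 := by linarith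
      have hnn : (0:ℝ) ≤ r ^ 2 - p 2 ^ 2 := by nlinarith [sq_nonneg (p 0), sq_nonneg (p 1)]
      have hzr : p 2 ≤ r := by nlinarith
      set c : ℂ := ⟨p 0, p 1⟩ with hc
      have ha : ‖c‖ = Real.sqrt (r ^ 2 - p 2 ^ 2) := by
        rw [Complex.norm_def, Complex.normSq_mk, ← hz2]
        ring_nf
      have hcos : Real.sqrt (r ^ 2 - p 2 ^ 2) * Real.cos c.arg = p 0 := by
        rw [← ha]; exact Complex.norm_mul_cos_arg c
      have hsin : Real.sqrt (r ^ 2 - p 2 ^ 2) * Real.sin c.arg = p 1 := by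
        rw [← ha]; exact Complex.norm_mul_sin_arg c
      have hxy : p 0 * p 1 < p 2 ^ 3 := by
        have h4 : p 0 * p 1 * p 2 < p 2 ^ 3 * p 2 := by nlinarith
        exact lt_of_mul_lt_mul_right h4 hz.le
      have hs : Real.sqrt (r ^ 2 - p 2 ^ 2) ^ 2 = r ^ 2 - p 2 ^ 2 := Real.sq_sqrt hnn
      refine ⟨(c.arg, p 2), ⟨hz, hzr, ?_⟩, ?_⟩
      · dsimp only
        calc (r ^ 2 - p 2 ^ 2) * (Real.cos c.arg * Real.sin c.arg)
            = (Real.sqrt (r ^ 2 - p 2 ^ 2) * Real.cos c.arg) *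
              (Real.sqrt (r ^ 2 - p 2 ^ 2) * Real.sin c.arg) := by
              linear_combination (-(Real.cos c.arg * Real.sin c.arg)) * hs
          _ = p 0 * p 1 := by rw [hcos, hsin]
          _ < p 2 ^ 3 := hxy
      · dsimp only
        rw [hcos, hsin, mk3_eta]
  rw [← himg]
  exact hDconn.image _ hΦc.continuousOn

lemma proj_cont (i : Fin 3) : Continuous (fun p : EuclideanSpace ℝ (Fin 3) => p i) :=
  (EuclideanSpace.proj i : EuclideanSpace ℝ (Fin 3) →L[ℝ] ℝ).continuous

lemma sMinus_preconn (r : ℝ) (hr : 0 < r) :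
    IsPreconnected {p : EuclideanSpace ℝ (Fin 3) |
      p 0 ^ 2 + p 1 ^ 2 + p 2 ^ 2 = r ^ 2 ∧ p 0 * p 1 * p 2 - p 2 ^ 4 < 0 ∧ p 2 < 0} := by
  have hc : Continuous (fun p : EuclideanSpace ℝ (Fin 3) => mk3 (-(p 0)) (p 1) (-(p 2))) :=
    cont_mk3 (proj_cont 0).neg (proj_cont 1) (proj_cont 2).neg
  have himg : (fun p : EuclideanSpace ℝ (Fin 3) => mk3 (-(p 0)) (p 1) (-(p 2))) ''
      {p : EuclideanSpace ℝ (Fin 3) |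
        p 0 ^ 2 + p 1 ^ 2 + p 2 ^ 2 = r ^ 2 ∧ p 0 * p 1 * p 2 - p 2 ^ 4 < 0 ∧ 0 < p 2}
      = {p : EuclideanSpace ℝ (Fin 3) |
        p 0 ^ 2 + p 1 ^ 2 + p 2 ^ 2 = r ^ 2 ∧ p 0 * p 1 * p 2 - p 2 ^ 4 < 0 ∧ p 2 < 0} := by
    ext q
    constructor
    · rintro ⟨p, ⟨h1, h2, h3⟩, rfl⟩
      simp only [mem_setOf_eq, mk3_0, mk3_1, mk3_2]
      refine ⟨by linear_combination h1, ?_, by linarith⟩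
      have : -p 0 * p 1 * -p 2 - (-p 2) ^ 4 = p 0 * p 1 * p 2 - p 2 ^ 4 := by ring
      rw [this]; exact h2
    · rintro ⟨h1, h2, h3⟩
      refine ⟨mk3 (-(q 0)) (q 1) (-(q 2)), ?_, ?_⟩
      · simp only [mem_setOf_eq, mk3_0, mk3_1, mk3_2]
        refine ⟨by linear_combination h1, ?_, by linarith⟩
        have : -q 0 * q 1 * -q 2 - (-q 2) ^ 4 = q 0 * q 1 * q 2 - q 2 ^ 4 := by ring
        rw [this]; exact h2
      · simp only [mk3_0, mk3_1, mk3_2, neg_neg]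
        exact mk3_eta q
  rw [← himg]
  exact (sPlus_preconn r hr).image _ hc.continuousOn

/-- **topology in Example `plik_8_4`.** There exists `r₀ > 0` such that for
every `r ∈ (0, r₀]` the set `S_r = {(x,y,z) : x² + y² + z² = r², xyz − z⁴ < 0}` has exactly
two connected components. -/
theorem statement16 :
    ∃ r₀ > (0 : ℝ), ∀ r ∈ Ioc (0 : ℝ) r₀,
      Nat.card (ConnectedComponents
        ↥{p : EuclideanSpace ℝ (Fin 3) |
          (p 0) ^ 2 + (p 1) ^ 2 + (p 2) ^ 2 = r ^ 2 ∧
          p 0 * p 1 * p 2 - (p 2) ^ 4 < 0}) = 2 := by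
  refine ⟨1, one_pos, ?_⟩
  rintro r ⟨hr, -⟩
  set S : Set (EuclideanSpace ℝ (Fin 3)) :=
    {p : EuclideanSpace ℝ (Fin 3) |
      (p 0) ^ 2 + (p 1) ^ 2 + (p 2) ^ 2 = r ^ 2 ∧ p 0 * p 1 * p 2 - (p 2) ^ 4 < 0} with hSdef
  have hz_ne : ∀ p ∈ S, p 2 ≠ 0 := by
    intro p hp h0
    have := hp.2
    rw [h0] at this
    norm_num at this
  set U : Set S := {x | 0 < (x : EuclideanSpace ℝ (Fin 3)) 2} with hUdef
  set V : Set S := {x | (x : EuclideanSpace ℝ (Fin 3)) 2 < 0} with hVdef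
  have hproj : Continuous (fun x : S => (x : EuclideanSpace ℝ (Fin 3)) 2) :=
    (proj_cont 2).comp continuous_subtype_val
  have hUo : IsOpen U := isOpen_lt continuous_const hproj
  have hVo : IsOpen V := isOpen_lt hproj continuous_const
  have hUV : ∀ x : S, x ∈ U ∨ x ∈ V := fun x => ((hz_ne x.1 x.2).lt_or_gt).symm
  have hUc : IsClosed U := by
    have : U = Vᶜ := by
      ext x
      simp only [hUdef, hVdef, mem_setOf_eq, mem_compl_iff, not_lt]
      exact ⟨le_of_lt, fun h => lt_of_le_of_ne h (Ne.symm (hz_ne x.1 x.2))⟩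
    rw [this]; exact hVo.isClosed_compl
  have hVc : IsClosed V := by
    have : V = Uᶜ := by
      ext x
      simp only [hUdef, hVdef, mem_setOf_eq, mem_compl_iff, not_lt]
      exact ⟨le_of_lt, fun h => lt_of_le_of_ne h (hz_ne x.1 x.2)⟩
    rw [this]; exact hUo.isClosed_compl
  have hUclopen : IsClopen U := ⟨hUc, hUo⟩
  have hVclopen : IsClopen V := ⟨hVc, hVo⟩
  have hUim : (Subtype.val '' U : Set (EuclideanSpace ℝ (Fin 3))) =
      {p : EuclideanSpace ℝ (Fin 3) |
        p 0 ^ 2 + p 1 ^ 2 + p 2 ^ 2 = r ^ 2 ∧ p 0 * p 1 * p 2 - p 2 ^ 4 < 0 ∧ 0 < p 2} := by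
    apply Subset.antisymm
    · rintro p ⟨⟨p, hp⟩, hx, rfl⟩
      exact ⟨hp.1, hp.2, hx⟩
    · rintro p ⟨h1, h2, h3⟩
      exact ⟨⟨p, ⟨h1, h2⟩⟩, h3, rfl⟩
  have hVim : (Subtype.val '' V : Set (EuclideanSpace ℝ (Fin 3))) =
      {p : EuclideanSpace ℝ (Fin 3) |
        p 0 ^ 2 + p 1 ^ 2 + p 2 ^ 2 = r ^ 2 ∧ p 0 * p 1 * p 2 - p 2 ^ 4 < 0 ∧ p 2 < 0} := by
    apply Subset.antisymm
    · rintro p ⟨⟨p, hp⟩, hx, rfl⟩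
      exact ⟨hp.1, hp.2, hx⟩
    · rintro p ⟨h1, h2, h3⟩
      exact ⟨⟨p, ⟨h1, h2⟩⟩, h3, rfl⟩
  have hUpre : IsPreconnected U :=
    Topology.IsInducing.subtypeVal.isPreconnected_image.mp
      (by rw [hUim]; exact sPlus_preconn r hr)
  have hVpre : IsPreconnected V :=
    Topology.IsInducing.subtypeVal.isPreconnected_image.mp
      (by rw [hVim]; exact sMinus_preconn r hr)
  have hcompU : ∀ x : S, x ∈ U → connectedComponent x = U := fun x hx =>
    subset_antisymm (hUclopen.connectedComponent_subset hx)
      (hUpre.subset_connectedComponent hx)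
  have hcompV : ∀ x : S, x ∈ V → connectedComponent x = V := fun x hx =>
    subset_antisymm (hVclopen.connectedComponent_subset hx)
      (hVpre.subset_connectedComponent hx)
  have hN : mk3 0 0 r ∈ S := by
    refine ⟨?_, ?_⟩ <;> simp only [hSdef, mem_setOf_eq, mk3_0, mk3_1, mk3_2]
    · ring
    · nlinarith [pow_pos hr 4]
  have hSo : mk3 0 0 (-r) ∈ S := by
    refine ⟨?_, ?_⟩ <;> simp only [hSdef, mem_setOf_eq, mk3_0, mk3_1, mk3_2]
    · ring
    · nlinarith [pow_pos hr 4]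
  have hNU : (⟨mk3 0 0 r, hN⟩ : S) ∈ U := by
    simp only [hUdef, mem_setOf_eq, mk3_2]; exact hr
  have hSV : (⟨mk3 0 0 (-r), hSo⟩ : S) ∈ V := by
    simp only [hVdef, mem_setOf_eq, mk3_2]; linarith
  rw [Nat.card_eq_two_iff]
  refine ⟨ConnectedComponents.mk ⟨mk3 0 0 r, hN⟩,
    ConnectedComponents.mk ⟨mk3 0 0 (-r), hSo⟩, ?_, ?_⟩
  · intro h
    rw [ConnectedComponents.coe_eq_coe] at h
    rw [hcompU _ hNU, hcompV _ hSV] at h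
    have : (⟨mk3 0 0 r, hN⟩ : S) ∈ V := h ▸ hNU
    simp only [hVdef, mem_setOf_eq, mk3_2] at this
    linarith
  · rw [eq_univ_iff_forall]
    intro cc
    obtain ⟨x, rfl⟩ := ConnectedComponents.surjective_coe cc
    rcases hUV x with hx | hx
    · exact Or.inl (ConnectedComponents.coe_eq_coe.mpr (by rw [hcompU _ hx, hcompU _ hNU]))
    · exact Or.inr (mem_singleton_iff.mpr
        (ConnectedComponents.coe_eq_coe.mpr (by rw [hcompV _ hx, hcompV _ hSV])))
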